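/- Let K/F be a finite field extension of odd characteristic finite fields (F = F_{p^s}, K = F_{p^r}, p odd) and σ ∈ Aut_F(K) nontrivial. Then D(K,σ,c) is a division algebra if and only if c is not a square in K. -/

import Mathlib

/-- The Dickson doubling multiplication on `B ⊕ B`. -/
def dicksonMul {B : Type*} [Ring B] (σ : B → B) (c : B) (p q : B × B) : B × B :=
  (p.1 * q.1 + c * σ (p.2 * q.2), p.1 * q.2 + p.2 * q.1)

/-- Every automorphism of a finite field acts as an odd power map on nonzero elements,
provided `-1 ≠ 1`. -/
lemma exists_odd_zpow {F K : Type*} [Field F] [Field K] [Finite K] [Algebra F K]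
    (hK : (-1 : K) ≠ 1) (σ : K ≃ₐ[F] K) :
    ∃ n : ℤ, Odd n ∧ ∀ x : K, x ≠ 0 → σ x = x ^ n := by
  obtain ⟨g, hg⟩ := IsCyclic.exists_generator (α := Kˣ)
  have hg0 : (g : K) ≠ 0 := g.ne_zero
  have hgσ : σ (g : K) ≠ 0 := by simp [hg0]
  obtain ⟨n, hn⟩ := Subgroup.mem_zpowers_iff.mp (hg (Units.mk0 _ hgσ))
  have hng : σ (g : K) = (g : K) ^ n := by
    have := congrArg Units.val hn
    simpa [Units.val_zpow_eq_zpow_val] using this.symm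
  have key : ∀ x : K, x ≠ 0 → σ x = x ^ n := by
    intro x hx
    obtain ⟨m, hm⟩ := Subgroup.mem_zpowers_iff.mp (hg (Units.mk0 x hx))
    have hxg : x = (g : K) ^ m := by
      have := congrArg Units.val hm
      simpa [Units.val_zpow_eq_zpow_val] using this.symm
    rw [hxg, map_zpow₀, hng, ← zpow_mul, ← zpow_mul, mul_comm]
  refine ⟨n, ?_, key⟩
  rcases Int.even_or_odd n with he | ho
  · exfalso
    have hm1 : (-1 : K) ≠ 0 := neg_ne_zero.mpr one_ne_zero
    have h1 : σ (-1 : K) = (-1 : K) ^ n := key (-1) hm1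
    rw [map_neg, map_one, he.neg_one_zpow] at h1
    exact hK h1
  · exact ho

theorem stmt3 (p : ℕ) [Fact p.Prime] (hp : p ≠ 2)
    (F K : Type*) [Field F] [Field K] [Finite K] [Algebra F K] [CharP F p]
    (σ : K ≃ₐ[F] K) (hσ : σ ≠ AlgEquiv.refl) (c : K) (hc : c ≠ 0) :
    (∀ u v : K × K, dicksonMul σ c u v = 0 → u = 0 ∨ v = 0) ↔ ¬ ∃ r : K, c = r ^ 2 := by
  haveI : CharP K p := charP_of_injective_algebraMap (algebraMap F K).injective p
  have hK : (-1 : K) ≠ 1 := by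
    intro h
    have h2 : ((2 : ℕ) : K) = 0 := by push_cast; linear_combination -h
    have hdvd : p ∣ 2 := (CharP.cast_eq_zero_iff K p 2).mp h2
    exact hp ((Nat.prime_dvd_prime_iff_eq (Fact.out) Nat.prime_two).mp hdvd)
  constructor
  · intro h hsq
    obtain ⟨r, rfl⟩ := hsq
    have hzero : dicksonMul σ (r ^ 2) (r, 1) (r, -1) = 0 := by
      simp only [dicksonMul]
      rw [Prod.ext_iff]
      refine ⟨?_, ?_⟩
      · simp only [one_mul, map_neg, map_one, Prod.fst_zero]
        ring
      · simp only [Prod.snd_zero]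
        ring
    rcases h (r, 1) (r, -1) hzero with h1 | h1
    · exact one_ne_zero (congrArg Prod.snd h1)
    · have h2 : (-1 : K) = 0 := congrArg Prod.snd h1
      exact hK (by linear_combination 2 * h2)
  · intro hnsq u v huv
    by_contra hcon
    push_neg at hcon
    obtain ⟨hu, hv⟩ := hcon
    have e1 : u.1 * v.1 + c * σ (u.2 * v.2) = 0 := congrArg Prod.fst huv
    have e2 : u.1 * v.2 + u.2 * v.1 = 0 := congrArg Prod.snd huv
    rw [map_mul] at e1
    by_cases hu2 : u.2 = 0
    · have hu1 : u.1 ≠ 0 := fun h1 => hu (Prod.ext h1 hu2)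
      apply hv
      rw [hu2, map_zero] at e1
      have hv1 : v.1 = 0 :=
        (mul_eq_zero.mp (by linear_combination e1)).resolve_left hu1
      rw [hu2] at e2
      have hv2 : v.2 = 0 :=
        (mul_eq_zero.mp (by linear_combination e2)).resolve_left hu1
      exact Prod.ext hv1 hv2
    by_cases hv2 : v.2 = 0
    · apply hu
      rw [hv2, map_zero] at e1
      rw [hv2] at e2
      by_cases hv1 : v.1 = 0
      · exact absurd (Prod.ext hv1 hv2) hv
      have hu1 : u.1 = 0 :=
        (mul_eq_zero.mp (by linear_combination e1)).resolve_right hv1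
      have hu2' : u.2 = 0 :=
        (mul_eq_zero.mp (by linear_combination e2)).resolve_right hv1
      exact Prod.ext hu1 hu2'
    have hσu2 : σ u.2 ≠ 0 := by simp [hu2]
    have hσv2 : σ v.2 ≠ 0 := by simp [hv2]
    have hu1 : u.1 ≠ 0 := by
      intro h1
      rw [h1] at e1
      have : c * (σ u.2 * σ v.2) = 0 := by linear_combination e1
      rcases mul_eq_zero.mp this with h | h
      · exact hc h
      · rcases mul_eq_zero.mp h with h' | h'
        · exact hσu2 h'
        · exact hσv2 h'
    -- main equation: c * u.2 * σ u.2 * σ v.2 = u.1 ^ 2 * v.2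
    have hmain : c * u.2 * σ u.2 * σ v.2 = u.1 ^ 2 * v.2 := by
      linear_combination u.2 * e1 - u.1 * e2
    obtain ⟨n, hodd, hσn⟩ := exists_odd_zpow hK σ
    obtain ⟨k, rfl⟩ := hodd
    rw [hσn u.2 hu2, hσn v.2 hv2] at hmain
    let a : Kˣ := Units.mk0 u.1 hu1
    let b : Kˣ := Units.mk0 u.2 hu2
    let d : Kˣ := Units.mk0 v.2 hv2
    let C : Kˣ := Units.mk0 c hc
    have hunit : C * b ^ (2 * k + 2 : ℤ) * d ^ (2 * k + 1 : ℤ) = a ^ 2 * d := by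
      apply Units.ext
      simp only [a, b, d, C, Units.val_mul, Units.val_zpow_eq_zpow_val,
        Units.val_pow_eq_pow_val, Units.val_mk0]
      rw [show (2 * k + 2 : ℤ) = 1 + (2 * k + 1) by ring, zpow_add₀ hu2, zpow_one]
      linear_combination hmain
    have hCsq : C = (a * d ^ (-k : ℤ) * b ^ (-(k + 1) : ℤ)) ^ 2 := by
      have h1 : C = a ^ 2 * d * (d ^ (2 * k + 1 : ℤ))⁻¹ * (b ^ (2 * k + 2 : ℤ))⁻¹ := by
        rw [← hunit]; group
      rw [h1, mul_pow, mul_pow]; group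
    apply hnsq
    refine ⟨(a * d ^ (-k : ℤ) * b ^ (-(k + 1) : ℤ) : Kˣ), ?_⟩
    have := congrArg Units.val hCsq
    simpa [C] using this
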